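/- Let S be a band (idempotent semigroup), let a, b ∈ S, and let g : Option Bool → S be any function with g (some false) = a and g (some true) = b. (i) If g none = a*b, then for every list l of elements of Option Bool, (a*b) * p * (a*b) = a*b, where p is the product in S of the list (l.map g) (interpreting the product of the empty list so that the whole expression reads (a*b)*(a*b) when l is empty). (ii) If instead g none = b*a, then (b*a) * p * (b*a) = b*a for every such list l. -/

import Mathlib

private lemma band_foldl_aux {S : Type*} [Semigroup S]
    (hband : ∀ x : S, x * x = x) (a b : S) :
    ∀ (L : List S), (∀ c ∈ L, c = a ∨ c = b ∨ c = a * b) →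
      ∀ p : S, p * (a * b) = a * b → p * (b * (a * b)) = a * b →
        L.foldl (· * ·) p * (a * b) = a * b := by
  intro L
  induction L with
  | nil => intro _ p h1 _; simpa using h1
  | cons c L ih =>
    intro hL p h1 h3
    have hc := hL c List.mem_cons_self
    have hL' : ∀ c ∈ L, c = a ∨ c = b ∨ c = a * b :=
      fun d hd => hL d (List.mem_cons_of_mem c hd)
    have haa : ∀ x : S, a * (a * x) = a * x := fun x => by
      rw [← mul_assoc, hband]
    have hbb : ∀ x : S, b * (b * x) = b * x := fun x => by
      rw [← mul_assoc, hband]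
    have hab : a * (b * (a * b)) = a * b := by
      rw [← mul_assoc a b (a * b), hband]
    simp only [List.foldl_cons]
    rcases hc with h | h | h <;> rw [h]
    · apply ih hL' (p * a)
      · rw [mul_assoc, haa]; exact h1
      · rw [mul_assoc, hab]; exact h1
    · apply ih hL' (p * b)
      · rw [mul_assoc]; exact h3
      · rw [mul_assoc, hbb]; exact h3
    · apply ih hL' (p * (a * b))
      · rw [mul_assoc, hband]; exact h1
      · rw [mul_assoc, mul_assoc a b, hbb, hab]; exact h1

/-- Let `S` be a band (idempotent semigroup), `a b : S`, and `g : Option Bool → S`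
with `g (some false) = a` and `g (some true) = b`.
(i) If `g none = a*b`, then for every list `l` over `Option Bool`,
`(a*b) * p * (a*b) = a*b`, where `p` is the product of `l.map g` (the product is
formed by left-folding starting from `a*b`, so the whole expression reads
`(a*b)*(a*b)` when `l` is empty).
(ii) If instead `g none = b*a`, then `(b*a) * p * (b*a) = b*a` for every such `l`. -/
theorem band_simple_word_generalizes {S : Type*} [Semigroup S]
    (hband : ∀ x : S, x * x = x) (a b : S) (g : Option Bool → S)
    (ha : g (some false) = a) (hb : g (some true) = b) :
    (g none = a * b →
      ∀ l : List (Option Bool),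
        ((l.map g).foldl (· * ·) (a * b)) * (a * b) = a * b) ∧
    (g none = b * a →
      ∀ l : List (Option Bool),
        ((l.map g).foldl (· * ·) (b * a)) * (b * a) = b * a) := by
  constructor
  · intro hn l
    apply band_foldl_aux hband a b _ _ (a * b) (hband _)
    · rw [← mul_assoc, mul_assoc a b b, hband, hband]
    · intro c hc
      rcases List.mem_map.1 hc with ⟨s, _, rfl⟩
      match s with
      | none => right; right; exact hn
      | some false => left; exact ha
      | some true => right; left; exact hb
  · intro hn l
    apply band_foldl_aux hband b a _ _ (b * a) (hband _)
    · rw [← mul_assoc, mul_assoc b a a, hband, hband]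
    · intro c hc
      rcases List.mem_map.1 hc with ⟨s, _, rfl⟩
      match s with
      | none => right; right; exact hn
      | some false => right; left; exact ha
      | some true => left; exact hb
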